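/- arXiv:1505.02030 — 3 statements merged into one kernel-verified Lean document; each statement's English description precedes it below -/
import Mathlib

section
/- Let ψ > 0, ρ > 0, 0 < ω < 1, and ρ > (√ψ + √(1−ω))². Then with Δ = (1 + (1−ω−ρ)/ψ)² − 4(1−ω)/ψ, the two numbers y_{B,C} = (1/2)((ρ+ω−1)/ψ − 1 ∓ √Δ) are real, distinct, and both strictly positive, and satisfy ρ y/(1+y) = ψ y + 1 − ω. -/
private lemma stmt_7_aux (ψ ρ ω : ℝ) (hψ : 0 < ψ) (hρ : 0 < ρ) (hω0 : 0 < ω) (hω1 : ω < 1)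
    (hbig : ρ > (Real.sqrt ψ + Real.sqrt (1 - ω)) ^ 2)
    (Δ yB yC : ℝ)
    (hΔdef : Δ = (1 + (1 - ω - ρ) / ψ) ^ 2 - 4 * (1 - ω) / ψ)
    (hyBdef : yB = (1 / 2) * ((ρ + ω - 1) / ψ - 1 - Real.sqrt Δ))
    (hyCdef : yC = (1 / 2) * ((ρ + ω - 1) / ψ - 1 + Real.sqrt Δ)) :
    0 < Δ ∧ yB ≠ yC ∧ 0 < yB ∧ 0 < yC ∧
      ρ * yB / (1 + yB) = ψ * yB + 1 - ω ∧
      ρ * yC / (1 + yC) = ψ * yC + 1 - ω := by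
  have hb : (0:ℝ) < 1 - ω := by linarith
  have hsψ : Real.sqrt ψ ^ 2 = ψ := Real.sq_sqrt hψ.le
  have hsb : Real.sqrt (1 - ω) ^ 2 = 1 - ω := Real.sq_sqrt hb.le
  have hsψ0 : 0 < Real.sqrt ψ := Real.sqrt_pos.mpr hψ
  have hsb0 : 0 < Real.sqrt (1 - ω) := Real.sqrt_pos.mpr hb
  have hsq : (Real.sqrt ψ + Real.sqrt (1 - ω)) ^ 2
      = ψ + 2 * (Real.sqrt ψ * Real.sqrt (1 - ω)) + (1 - ω) := by
    rw [add_sq, hsψ, hsb]; ring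
  have hexp : ρ > ψ + (1 - ω) + 2 * (Real.sqrt ψ * Real.sqrt (1 - ω)) := by
    rw [hsq] at hbig; linarith
  set s : ℝ := (ρ + ω - 1) / ψ - 1 with hsdef
  have hψne : ψ ≠ 0 := ne_of_gt hψ
  have key : s * ψ = ρ + ω - 1 - ψ := by rw [hsdef]; field_simp
  have hΔψ : Δ * ψ ^ 2 = (ρ + ω - 1 - ψ) ^ 2 - 4 * (1 - ω) * ψ := by
    rw [hΔdef]; field_simp; ring
  clear_value s
  have hr2 : (ρ + ω - 1 - ψ) ^ 2 > 4 * ((1 - ω) * ψ) := by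
    nlinarith [mul_pos hsψ0 hsb0, hexp,
      sq_nonneg (ρ + ω - 1 - ψ - 2 * (Real.sqrt ψ * Real.sqrt (1 - ω))), hsψ, hsb]
  have hsψpos : 0 < s * ψ := by
    rw [key]; nlinarith [mul_pos hsψ0 hsb0]
  have hspos : 0 < s := by
    by_contra h
    push_neg at h
    have := mul_nonpos_of_nonpos_of_nonneg h hψ.le
    linarith
  have hΔψ2pos : 0 < Δ * ψ ^ 2 := by rw [hΔψ]; linarith [hr2]
  have hΔpos : 0 < Δ := by
    by_contra h
    push_neg at h
    have := mul_nonpos_of_nonpos_of_nonneg h (sq_nonneg ψ)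
    linarith
  have hsqΔ : Real.sqrt Δ ^ 2 = Δ := Real.sq_sqrt hΔpos.le
  have hsqΔ0 : 0 < Real.sqrt Δ := Real.sqrt_pos.mpr hΔpos
  have hdiff : (s ^ 2 - Δ) * ψ ^ 2 = 4 * (1 - ω) * ψ := by
    linear_combination (-1 : ℝ) * hΔψ + (s * ψ + (ρ + ω - 1 - ψ)) * key
  have hΔlts : Δ < s ^ 2 := by
    by_contra h
    push_neg at h
    have h1 : s ^ 2 - Δ ≤ 0 := by linarith
    have := mul_nonpos_of_nonpos_of_nonneg h1 (sq_nonneg ψ)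
    have h2 : 0 < 4 * (1 - ω) * ψ := by positivity
    linarith
  have hΔlt : Real.sqrt Δ < s := by
    have h := Real.sqrt_lt_sqrt hΔpos.le hΔlts
    rwa [Real.sqrt_sq hspos.le] at h
  have hyB : 0 < yB := by rw [hyBdef]; linarith
  have hyC : 0 < yC := by rw [hyCdef]; linarith
  have hne : yB ≠ yC := by
    rw [hyBdef, hyCdef]; intro h; linarith
  have hΔψ2 : Δ * ψ = s ^ 2 * ψ - 4 * (1 - ω) := by
    apply mul_right_cancel₀ hψne
    linear_combination hΔψ + (-(s * ψ) - (ρ + ω - 1 - ψ)) * key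
  have hroot : ∀ y : ℝ, 0 < y → ψ * y ^ 2 - (ρ + ω - 1 - ψ) * y + (1 - ω) = 0 →
      ρ * y / (1 + y) = ψ * y + 1 - ω := by
    intro y hy heq
    have h1 : (1 + y) ≠ 0 := by positivity
    field_simp
    linear_combination -heq
  refine ⟨hΔpos, hne, hyB, hyC, ?_, ?_⟩
  · apply hroot _ hyB
    rw [hyBdef]
    linear_combination (ψ/4) * hsqΔ + ((s - Real.sqrt Δ)/2) * key + (1/4 : ℝ) * hΔψ2
  · apply hroot _ hyC
    rw [hyCdef]
    linear_combination (ψ/4) * hsqΔ + ((s + Real.sqrt Δ)/2) * key + (1/4 : ℝ) * hΔψ2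

theorem stmt_7 (ψ ρ ω : ℝ) (hψ : 0 < ψ) (hρ : 0 < ρ) (hω0 : 0 < ω) (hω1 : ω < 1)
    (hbig : ρ > (Real.sqrt ψ + Real.sqrt (1 - ω)) ^ 2) :
    let Δ := (1 + (1 - ω - ρ) / ψ) ^ 2 - 4 * (1 - ω) / ψ
    let yB := (1 / 2) * ((ρ + ω - 1) / ψ - 1 - Real.sqrt Δ)
    let yC := (1 / 2) * ((ρ + ω - 1) / ψ - 1 + Real.sqrt Δ)
    0 < Δ ∧ yB ≠ yC ∧ 0 < yB ∧ 0 < yC ∧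
      ρ * yB / (1 + yB) = ψ * yB + 1 - ω ∧
      ρ * yC / (1 + yC) = ψ * yC + 1 - ω :=
  stmt_7_aux ψ ρ ω hψ hρ hω0 hω1 hbig _ _ _ rfl rfl rfl
end

section
/- Let d, ω, ζ > 0, ψ ≥ 0, γ > 0 with ψ > γ. Then the equation θ⁴ + d(2ψζ + dω²)θ² + d²ζ²(ψ² − γ²) = 0 has no real solution θ ≠ 0, and hence the characteristic quasi-polynomial W(λ) = λ² + dωλ − dψζ + dζγe^{−λτ} has no purely imaginary roots for any τ ≥ 0. -/
theorem stmt_9 (d ω ζ ψ γ : ℝ) (hd : 0 < d) (hω : 0 < ω) (hζ : 0 < ζ)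
    (hψ : 0 ≤ ψ) (hγ : 0 < γ) (hψγ : ψ > γ) :
    (∀ θ : ℝ, θ ≠ 0 →
      θ ^ 4 + d * (2 * ψ * ζ + d * ω ^ 2) * θ ^ 2 + d ^ 2 * ζ ^ 2 * (ψ ^ 2 - γ ^ 2) ≠ 0) ∧
    (∀ τ : ℝ, 0 ≤ τ → ∀ θ : ℝ, θ ≠ 0 →
      (Complex.I * θ) ^ 2 + (d * ω : ℝ) * (Complex.I * θ) - (d * ψ * ζ : ℝ)
        + (d * ζ * γ : ℝ) * Complex.exp (-(Complex.I * θ) * (τ : ℝ)) ≠ 0) := by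
  have key : ∀ θ : ℝ, θ ≠ 0 →
      θ ^ 4 + d * (2 * ψ * ζ + d * ω ^ 2) * θ ^ 2 + d ^ 2 * ζ ^ 2 * (ψ ^ 2 - γ ^ 2) ≠ 0 := by
    intro θ hθ
    have h2 : 0 < θ ^ 2 := by positivity
    have h4 : 0 < θ ^ 4 := by positivity
    have hlast : 0 < d ^ 2 * ζ ^ 2 * (ψ ^ 2 - γ ^ 2) :=
      mul_pos (mul_pos (pow_pos hd 2) (pow_pos hζ 2)) (by nlinarith)
    have hmid : 0 ≤ d * (2 * ψ * ζ + d * ω ^ 2) * θ ^ 2 := by positivity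
    positivity
  refine ⟨key, ?_⟩
  intro τ hτ θ hθ h
  have hexp : Complex.exp (-(Complex.I * (θ : ℝ)) * (τ : ℝ)) =
      (Real.cos (θ * τ) : ℝ) - (Real.sin (θ * τ) : ℝ) * Complex.I := by
    have e : -(Complex.I * (θ : ℝ)) * (τ : ℝ) = ((-(θ * τ) : ℝ) : ℂ) * Complex.I := by
      push_cast; ring
    rw [e, Complex.exp_mul_I]
    push_cast
    simp [Complex.cos_neg, Complex.sin_neg, ← Complex.ofReal_cos, ← Complex.ofReal_sin]
    ring
  rw [hexp] at h
  have hre := congrArg Complex.re h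
  have him := congrArg Complex.im h
  simp [Complex.add_re, Complex.add_im, Complex.sub_re, Complex.sub_im, Complex.mul_re,
    Complex.mul_im, Complex.I_re, Complex.I_im, Complex.ofReal_re, Complex.ofReal_im,
    pow_two, ← Complex.ofReal_mul, Complex.cos_ofReal_re, Complex.cos_ofReal_im,
    Complex.sin_ofReal_re, Complex.sin_ofReal_im] at hre him
  have hpyth := Real.sin_sq_add_cos_sq (θ * τ)
  have e1 : d * ζ * γ * Real.cos (θ * τ) = θ * θ + d * ψ * ζ := by linarith
  have e2 : d * ζ * γ * Real.sin (θ * τ) = d * ω * θ := by linarith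
  have h3 : (θ * θ + d * ψ * ζ) ^ 2 + (d * ω * θ) ^ 2 = (d * ζ * γ) ^ 2 := by
    rw [← e1, ← e2]; nlinarith [hpyth]
  exact key θ hθ (by nlinarith [h3])
end

section
/- Let d, ω, ζ, γ > 0, ψ ≥ 0 with ψ < γ, and let η = (−(2dζψ + (dω)²) + √((dω)⁴ + 4d³ζψω² + 4(dζγ)²))/2 and θ̄ = √η. Then 0 < θ̄² + dψζ < dζγ, so that cos(θ̄τ) = (θ̄² + dψζ)/(dζγ) ∈ (0,1) is solvable for τ. -/
theorem stmt_13 (d ω ζ γ ψ : ℝ) (hd : 0 < d) (hω : 0 < ω) (hζ : 0 < ζ)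
    (hγ : 0 < γ) (hψ : 0 ≤ ψ) (hψγ : ψ < γ) :
    let η := (-(2 * d * ζ * ψ + (d * ω) ^ 2) +
      Real.sqrt ((d * ω) ^ 4 + 4 * d ^ 3 * ζ * ψ * ω ^ 2 + 4 * (d * ζ * γ) ^ 2)) / 2
    let θ := Real.sqrt η
    0 < θ ^ 2 + d * ψ * ζ ∧ θ ^ 2 + d * ψ * ζ < d * ζ * γ ∧
      ∃ τ : ℝ, Real.cos (θ * τ) = (θ ^ 2 + d * ψ * ζ) / (d * ζ * γ) := by
  intro η θ
  set A := 2 * d * ζ * ψ + (d * ω) ^ 2 with hA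
  set S := (d * ω) ^ 4 + 4 * d ^ 3 * ζ * ψ * ω ^ 2 + 4 * (d * ζ * γ) ^ 2 with hS
  have hA0 : 0 ≤ A := by positivity
  have h1 : A < Real.sqrt S := by
    rw [Real.lt_sqrt hA0]
    have hsq : ψ ^ 2 < γ ^ 2 := by nlinarith
    nlinarith [hsq, pow_pos (mul_pos hd hζ) 2]
  have hη : 0 < η := by
    show 0 < (-A + Real.sqrt S) / 2
    linarith
  have h2 : Real.sqrt S < A + 2 * (d * ζ) * (γ - ψ) := by
    have hpos : 0 < A + 2 * (d * ζ) * (γ - ψ) := by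
      have : 0 < 2 * (d * ζ) * (γ - ψ) :=
        mul_pos (by positivity) (sub_pos.mpr hψγ)
      linarith
    rw [show Real.sqrt S < A + 2 * (d * ζ) * (γ - ψ) ↔
        S < (A + 2 * (d * ζ) * (γ - ψ)) ^ 2 from Real.sqrt_lt' hpos]
    have hdw : 0 < (d * ω) ^ 2 := by positivity
    nlinarith [mul_pos (mul_pos hd hζ) (sub_pos.mpr hψγ),
      mul_pos (mul_pos (mul_pos hd hζ) (sub_pos.mpr hψγ)) hdw]
  have hθ2 : θ ^ 2 = η := Real.sq_sqrt hη.le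
  have hc1 : 0 < θ ^ 2 + d * ψ * ζ := by
    rw [hθ2]; nlinarith [mul_nonneg (mul_nonneg hd.le hψ) hζ.le]
  have hc2 : θ ^ 2 + d * ψ * ζ < d * ζ * γ := by
    rw [hθ2]
    have : η < d * ζ * (γ - ψ) := by
      show (-A + Real.sqrt S) / 2 < d * ζ * (γ - ψ)
      linarith
    nlinarith
  refine ⟨hc1, hc2, ?_⟩
  have hθpos : 0 < θ := Real.sqrt_pos.mpr hη
  set c := (θ ^ 2 + d * ψ * ζ) / (d * ζ * γ) with hcdef
  have hdenom : 0 < d * ζ * γ := by positivity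
  have hc01 : 0 < c ∧ c < 1 := ⟨div_pos hc1 hdenom, (div_lt_one hdenom).mpr hc2⟩
  refine ⟨Real.arccos c / θ, ?_⟩
  rw [mul_div_cancel₀ _ hθpos.ne']
  exact Real.cos_arccos (by linarith [hc01.1]) hc01.2.le
end
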